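/- Let L ⊆ ℤ^n be a tiling of ℤ^n by translates of a finite set V ⊆ ℤ^n, and let a be an integer relatively prime to |V|. Then L is also a tiling of ℤ^n by translates of the blowout tile a·V = {a·v : v ∈ V}; that is, every x ∈ ℤ^n has a unique representation x = a·v + l with v ∈ V and l ∈ L. -/

import Mathlib

/-- A set `L ⊆ ℤ^n` tiles `ℤ^n` by translates of `V` if every `x ∈ ℤ^n` has a unique
representation `x = v + l` with `v ∈ V` and `l ∈ L`. -/
def IsTiling {n : ℕ} (V L : Set (Fin n → ℤ)) : Prop :=
  ∀ x : Fin n → ℤ, ∃! p : (Fin n → ℤ) × (Fin n → ℤ),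
    p.1 ∈ V ∧ p.2 ∈ L ∧ x = p.1 + p.2

namespace Blowout

open Finset

variable {n : ℕ}

open scoped Classical in
/-- number of `w ∈ W` with `x - w ∈ L` -/
noncomputable def cnt (L : Set (Fin n → ℤ)) (W : Finset (Fin n → ℤ)) (x : Fin n → ℤ) : ℕ :=
  ∑ w ∈ W, if x - w ∈ L then 1 else 0

/-- `W` tiles with complement `L`. -/
def Tiles (L : Set (Fin n → ℤ)) (W : Finset (Fin n → ℤ)) : Prop := ∀ x, cnt L W x = 1

variable {L : Set (Fin n → ℤ)} {V W : Finset (Fin n → ℤ)}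

open scoped Classical in
lemma cnt_eq_card (L : Set (Fin n → ℤ)) (W : Finset (Fin n → ℤ)) (x : Fin n → ℤ) :
    cnt L W x = (W.filter fun w => x - w ∈ L).card :=
  (Finset.card_filter _ _).symm

lemma exists_of_tiles (hW : Tiles L W) (x : Fin n → ℤ) : ∃ w ∈ W, x - w ∈ L := by
  classical
  by_contra h
  push_neg at h
  have h0 : cnt L W x = 0 := by
    unfold cnt
    exact Finset.sum_eq_zero fun w hw => by simp [h w hw]
  have := hW x
  omega

lemma uniq_of_tiles (hW : Tiles L W) {x w₁ w₂ : Fin n → ℤ} (h₁ : w₁ ∈ W) (h₂ : w₂ ∈ W)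
    (m₁ : x - w₁ ∈ L) (m₂ : x - w₂ ∈ L) : w₁ = w₂ := by
  classical
  by_contra hne
  have hle : ∑ w ∈ ({w₁, w₂} : Finset (Fin n → ℤ)), (if x - w ∈ L then 1 else 0)
      ≤ cnt L W x := by
    unfold cnt
    apply Finset.sum_le_sum_of_subset
    intro w hw
    simp only [Finset.mem_insert, Finset.mem_singleton] at hw
    rcases hw with rfl | rfl <;> assumption
  rw [Finset.sum_pair hne, if_pos m₁, if_pos m₂] at hle
  have := hW x
  omega

lemma sumA (hV : Tiles L V) (W : Finset (Fin n → ℤ)) (x : Fin n → ℤ) :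
    ∑ v ∈ V, cnt L W (x - v) = W.card := by
  classical
  unfold cnt
  rw [Finset.sum_comm]
  have : ∀ w ∈ W, (∑ v ∈ V, if x - v - w ∈ L then 1 else 0) = 1 := by
    intro w _
    have h := hV (x - w)
    unfold cnt at h
    calc (∑ v ∈ V, if x - v - w ∈ L then 1 else 0)
        = ∑ v ∈ V, if x - w - v ∈ L then 1 else 0 := by
          apply Finset.sum_congr rfl
          intro v _
          rw [sub_right_comm]
      _ = 1 := h
  rw [Finset.sum_congr rfl this, Finset.sum_const, smul_eq_mul, mul_one]

lemma tiles_of_ge (hV : Tiles L V) (hcard : W.card = V.card)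
    (h : ∀ x, 1 ≤ cnt L W x) : Tiles L W := by
  intro y
  obtain ⟨v₀, hv₀, -⟩ := exists_of_tiles hV y
  have hsum := sumA hV W (y + v₀)
  by_contra hne
  have hlt : ∑ _v ∈ V, 1 < ∑ v ∈ V, cnt L W (y + v₀ - v) := by
    apply Finset.sum_lt_sum (fun v _ => h _)
    exact ⟨v₀, hv₀, by rw [add_sub_cancel_right]; have := h y; omega⟩
  rw [hsum, Finset.sum_const, smul_eq_mul, mul_one] at hlt
  omega

lemma tiles_of_le (hV : Tiles L V) (hcard : W.card = V.card)
    (h : ∀ x, cnt L W x ≤ 1) : Tiles L W := by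
  intro y
  by_contra hne
  obtain ⟨v₀, hv₀, -⟩ := exists_of_tiles hV y
  have hsum := sumA hV W (y + v₀)
  have hlt : ∑ v ∈ V, cnt L W (y + v₀ - v) < ∑ _v ∈ V, 1 := by
    apply Finset.sum_lt_sum (fun v _ => h _)
    exact ⟨v₀, hv₀, by rw [add_sub_cancel_right]; have := h y; omega⟩
  rw [hsum, Finset.sum_const, smul_eq_mul, mul_one] at hlt
  omega

lemma tiles_neg (hV : Tiles L V) (hW : Tiles L W) (hcard : W.card = V.card) :
    Tiles L (W.image fun w => -w) := by
  classical
  apply tiles_of_le hV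
  · rw [Finset.card_image_of_injective _ neg_injective]; exact hcard
  intro x
  by_contra h
  push_neg at h
  rw [cnt_eq_card] at h
  obtain ⟨u₁, hu₁, u₂, hu₂, hune⟩ := Finset.one_lt_card.mp h
  rw [Finset.mem_filter, Finset.mem_image] at hu₁ hu₂
  obtain ⟨⟨w₁, hw₁, rfl⟩, hm₁⟩ := hu₁
  obtain ⟨⟨w₂, hw₂, rfl⟩, hm₂⟩ := hu₂
  rw [sub_neg_eq_add] at hm₁ hm₂
  have : w₁ = w₂ := by
    apply uniq_of_tiles hW (x := x + w₁ + w₂) hw₁ hw₂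
    · rw [add_right_comm, add_sub_cancel_right]; exact hm₂
    · rw [add_sub_cancel_right]; exact hm₁
  exact hune (by rw [this])

section Prime

variable {p : ℕ}

lemma amaCharP (G : Type*) [AddMonoid G] (p : ℕ) [Fact p.Prime] :
    CharP (AddMonoidAlgebra (ZMod p) G) p :=
  ⟨fun m => by
    rw [AddMonoidAlgebra.natCast_def, AddMonoidAlgebra.single_eq_zero]
    exact CharP.cast_eq_zero_iff (ZMod p) p m⟩

lemma key_congruence (hp : p.Prime) (hW : Tiles L W) (x : Fin n → ℤ) :
    ((cnt L (W.image fun w => (p : ℤ) • w) x : ZMod p)) = (W.card : ZMod p) ^ (p - 1) := by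
  classical
  haveI : Fact p.Prime := ⟨hp⟩
  haveI : CharP (AddMonoidAlgebra (ZMod p) (Fin n → ℤ)) p := amaCharP _ p
  have hp0 : (p : ℤ) ≠ 0 := by exact_mod_cast hp.ne_zero
  have hinj : Function.Injective (fun w : Fin n → ℤ => (p : ℤ) • w) :=
    smul_right_injective _ hp0
  -- rewrite cnt over the image as a sum over W
  have hsum : ((cnt L (W.image fun w => (p : ℤ) • w) x : ZMod p))
      = ∑ w ∈ W, (if x - (p : ℤ) • w ∈ L then (1 : ZMod p) else 0) := by
    unfold cnt
    push_cast
    rw [Finset.sum_image (fun a _ b _ hab => hinj hab)]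
  rw [hsum]
  -- the monoid algebra setup
  set S : AddMonoidAlgebra (ZMod p) (Fin n → ℤ) :=
    ∑ w ∈ W, AddMonoidAlgebra.single w (1 : ZMod p) with hS
  set φ : (Fin n → ℤ) → AddMonoidAlgebra (ZMod p) (Fin n → ℤ) →+ ZMod p := fun z =>
    (Finsupp.liftAddHom (fun y => if z - y ∈ L then AddMonoidHom.id (ZMod p) else 0)).comp
      (AddMonoidAlgebra.coeffAddEquiv).toAddMonoidHom with hφ
  have φ_single : ∀ z y (c : ZMod p),
      φ z (AddMonoidAlgebra.single y c) = if z - y ∈ L then c else 0 := by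
    intro z y c
    show (Finsupp.liftAddHom (fun y => if z - y ∈ L then AddMonoidHom.id (ZMod p) else 0))
      (Finsupp.single y c) = _
    refine (Finsupp.liftAddHom_apply_single
      (fun y => if z - y ∈ L then AddMonoidHom.id (ZMod p) else 0) y c).trans ?_
    split <;> rfl
  set ε : AddMonoidAlgebra (ZMod p) (Fin n → ℤ) →+ ZMod p :=
    (Finsupp.liftAddHom (fun _ => AddMonoidHom.id (ZMod p))).comp
      (AddMonoidAlgebra.coeffAddEquiv).toAddMonoidHom with hε
  have ε_single : ∀ y (c : ZMod p), ε (AddMonoidAlgebra.single y c) = c := by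
    intro y c
    exact Finsupp.liftAddHom_apply_single (fun (_ : Fin n → ℤ) => AddMonoidHom.id (ZMod p)) y c
  -- counting lemma: sums of shifted indicators
  have hcnt1 : ∀ z (c : ZMod p), (∑ w ∈ W, if z - w ∈ L then c else 0) = c := by
    intro z c
    have h1 := hW z
    unfold cnt at h1
    have : (∑ w ∈ W, if z - w ∈ L then c else 0)
        = ((∑ w ∈ W, if z - w ∈ L then (1 : ℕ) else 0 : ℕ) : ZMod p) * c := by
      push_cast
      rw [Finset.sum_mul]
      apply Finset.sum_congr rfl
      intro w _
      split <;> simp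
    rw [this, h1, Nat.cast_one, one_mul]
  -- S times a single
  have hmulsingle : ∀ (y : Fin n → ℤ) (c : ZMod p),
      (S * AddMonoidAlgebra.single y c : AddMonoidAlgebra (ZMod p) (Fin n → ℤ))
        = ∑ w ∈ W, AddMonoidAlgebra.single (w + y) c := by
    intro y c
    rw [hS, Finset.sum_mul]
    exact Finset.sum_congr rfl fun w _ => by
      rw [AddMonoidAlgebra.single_mul_single, one_mul]
  -- φ z (S * B) = ε B
  have hconv : ∀ z (B : AddMonoidAlgebra (ZMod p) (Fin n → ℤ)), φ z (S * B) = ε B := by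
    intro z
    have hhom : (φ z).comp (AddMonoidHom.mulLeft S) = ε := by
      apply AddMonoidAlgebra.addMonoidHom_ext
      intro y c
      show φ z (S * AddMonoidAlgebra.single y c) = ε (AddMonoidAlgebra.single y c)
      rw [hmulsingle, map_sum, ε_single]
      have hrw : ∀ w ∈ W, φ z (AddMonoidAlgebra.single (w + y) c)
          = if (z - y) - w ∈ L then c else 0 := by
        intro w _
        rw [φ_single]
        have heq : z - (w + y) = z - y - w := by rw [add_comm w y, ← sub_sub]
        rw [heq]
      rw [Finset.sum_congr rfl hrw, hcnt1]
    intro B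
    exact DFunLike.congr_fun hhom B
  -- ε (S * B) = W.card * ε B
  have hεmul : ∀ B : AddMonoidAlgebra (ZMod p) (Fin n → ℤ),
      ε (S * B) = (W.card : ZMod p) * ε B := by
    have hhom : ε.comp (AddMonoidHom.mulLeft S)
        = (AddMonoidHom.mulLeft ((W.card : ZMod p))).comp ε := by
      apply AddMonoidAlgebra.addMonoidHom_ext
      intro y c
      show ε (S * AddMonoidAlgebra.single y c) = (W.card : ZMod p) * ε (AddMonoidAlgebra.single y c)
      rw [hmulsingle, map_sum, ε_single,
        Finset.sum_congr rfl (fun w (_ : w ∈ W) => ε_single (w + y) c),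
        Finset.sum_const, nsmul_eq_mul]
    intro B
    exact DFunLike.congr_fun hhom B
  -- ε (S ^ m) = W.card ^ m
  have hεpow : ∀ m : ℕ, ε (S ^ m) = (W.card : ZMod p) ^ m := by
    intro m
    induction m with
    | zero =>
      rw [pow_zero, pow_zero]
      exact ε_single 0 1
    | succ m ih =>
      rw [pow_succ, mul_comm, hεmul, ih, pow_succ, mul_comm]
  -- Frobenius
  have hfrob : S ^ p = ∑ w ∈ W, AddMonoidAlgebra.single ((p : ℤ) • w) (1 : ZMod p) := by
    rw [hS, sum_pow_char]
    apply Finset.sum_congr rfl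
    intro w _
    rw [AddMonoidAlgebra.single_pow, one_pow, natCast_zsmul]
  have hpsplit : S ^ p = S * S ^ (p - 1) := by
    have h' : p - 1 + 1 = p := Nat.succ_pred_eq_of_pos hp.pos
    have h2 : S ^ p = S ^ (p - 1 + 1) := congrArg (fun m => S ^ m) h'.symm
    rw [h2, pow_succ, mul_comm]
  calc (∑ w ∈ W, if x - (p : ℤ) • w ∈ L then (1 : ZMod p) else 0)
      = φ x (S ^ p) := by
        rw [hfrob, map_sum]
        apply Finset.sum_congr rfl
        intro w _
        rw [φ_single]
    _ = ε (S ^ (p - 1)) := by rw [hpsplit, hconv]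
    _ = (W.card : ZMod p) ^ (p - 1) := hεpow _

lemma tiles_smul_prime (hV : Tiles L V) (hW : Tiles L W) (hcard : W.card = V.card)
    (hp : p.Prime) (hdvd : ¬ (p ∣ V.card)) :
    Tiles L (W.image fun w => (p : ℤ) • w) := by
  classical
  haveI : Fact p.Prime := ⟨hp⟩
  have hp0 : (p : ℤ) ≠ 0 := by exact_mod_cast hp.ne_zero
  have hinj : Function.Injective (fun w : Fin n → ℤ => (p : ℤ) • w) :=
    smul_right_injective _ hp0
  apply tiles_of_ge hV
  · rw [Finset.card_image_of_injective _ hinj]; exact hcard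
  intro x
  have hcong := key_congruence hp hW x
  rw [hcard] at hcong
  have hVne : (V.card : ZMod p) ≠ 0 := by
    rw [Ne, ZMod.natCast_eq_zero_iff]
    exact hdvd
  rw [ZMod.pow_card_sub_one_eq_one hVne] at hcong
  by_contra h0
  have hz : cnt L (W.image fun w => (p : ℤ) • w) x = 0 := by omega
  rw [hz] at hcong
  simp at hcong

end Prime

lemma tiles_zsmul (hV : Tiles L V) :
    ∀ m : ℕ, ∀ a : ℤ, a.natAbs = m → a ≠ 0 →
      (∀ q : ℕ, q.Prime → (q : ℤ) ∣ a → ¬ (q ∣ V.card)) →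
      Tiles L (V.image fun v => a • v) := by
  intro m
  induction m using Nat.strong_induction_on with
  | _ m IH =>
    intro a ham ha0 hq
    rcases eq_or_ne a 1 with rfl | ha1
    · have himg : (V.image fun v => (1 : ℤ) • v) = V := by
        apply Finset.image_congr (g := id) (fun v _ => one_smul ℤ v) |>.trans
        exact Finset.image_id
      rwa [himg]
    rcases eq_or_ne a (-1) with rfl | haneg
    · have himg : (V.image fun v => (-1 : ℤ) • v) = V.image fun v => -v := by
        apply Finset.image_congr
        intro v _
        exact neg_one_smul ℤ v
      rw [himg]
      exact tiles_neg hV hV rfl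
    · have habs : 2 ≤ a.natAbs := by
        rcases Int.natAbs_eq_iff (a := a) (n := 1) with h
        have h0 : a.natAbs ≠ 0 := fun h' => ha0 (Int.natAbs_eq_zero.mp h')
        have h1 : a.natAbs ≠ 1 := by
          intro h'
          rcases Int.natAbs_eq_iff.mp h' with h'' | h''
          · exact ha1 (by simpa using h'')
          · exact haneg (by simpa using h'')
        omega
      obtain ⟨q, hqp, hqdvd⟩ := Nat.exists_prime_and_dvd (n := a.natAbs) (by omega)
      have hqa : (q : ℤ) ∣ a := by
        rw [← Int.dvd_natAbs]
        exact_mod_cast hqdvd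
      obtain ⟨b, rfl⟩ := hqa
      have hb0 : b ≠ 0 := by
        rintro rfl
        simp at ha0
      have hbinj : Function.Injective (fun v : Fin n → ℤ => b • v) :=
        smul_right_injective _ hb0
      have hblt : b.natAbs < m := by
        rw [← ham, Int.natAbs_mul, Int.natAbs_natCast]
        have hb1 : 1 ≤ b.natAbs := by
          rcases Nat.eq_zero_or_pos b.natAbs with h | h
          · exact absurd (Int.natAbs_eq_zero.mp h) hb0
          · omega
        have := hqp.two_le
        calc b.natAbs = 1 * b.natAbs := (one_mul _).symm
          _ < q * b.natAbs := by
            exact Nat.mul_lt_mul_of_lt_of_le (by omega) (le_refl _) (by omega)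
      have hIH : Tiles L (V.image fun v => b • v) :=
        IH b.natAbs hblt b rfl hb0 (fun r hr hrb => hq r hr (hrb.mul_left _))
      have hstep := tiles_smul_prime hV hIH
        (by rw [Finset.card_image_of_injective _ hbinj]) hqp
        (hq q hqp (Dvd.intro b rfl))
      have himg : ((V.image fun v => b • v).image fun w => (q : ℤ) • w)
          = V.image fun v => ((q : ℤ) * b) • v := by
        rw [Finset.image_image]
        apply Finset.image_congr
        intro v _
        simp only [Function.comp_apply]
        rw [smul_smul]
      rwa [himg] at hstep

lemma tiles_of_isTiling (hL : IsTiling (V : Set (Fin n → ℤ)) L) : Tiles L V := by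
  classical
  intro x
  obtain ⟨⟨v, l⟩, ⟨hv, hl, hxe⟩, huniq⟩ := hL x
  simp only [Finset.mem_coe] at hv
  have hxv : x - v ∈ L := by rw [hxe]; simpa using hl
  unfold cnt
  rw [Finset.sum_eq_single_of_mem v hv]
  · rw [if_pos hxv]
  · intro w hw hwne
    rw [if_neg]
    intro hxw
    have := huniq (w, x - w) ⟨by simpa using hw, hxw, by simp⟩
    apply hwne
    have : w = v := congrArg Prod.fst this
    exact this

end Blowout

/-- Blowout: if `L` tiles `ℤ^n` by translates of `V` and `gcd(a, |V|) = 1`, then `L` also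
tiles `ℤ^n` by translates of `a·V`: every `x` is uniquely `x = a·v + l`, `v ∈ V`,
`l ∈ L`. -/
theorem blowout_tiling {n : ℕ} (V : Finset (Fin n → ℤ)) (L : Set (Fin n → ℤ))
    (hL : IsTiling (V : Set (Fin n → ℤ)) L) (a : ℤ) (ha : Int.gcd a (V.card : ℤ) = 1) :
    ∀ x : Fin n → ℤ, ∃! p : (Fin n → ℤ) × (Fin n → ℤ),
      p.1 ∈ (V : Set (Fin n → ℤ)) ∧ p.2 ∈ L ∧ x = a • p.1 + p.2 := by
  classical
  have hV : Blowout.Tiles L V := Blowout.tiles_of_isTiling hL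
  intro x
  by_cases ha0 : a = 0
  · subst ha0
    have hcard : V.card = 1 := by
      have : Int.gcd 0 (V.card : ℤ) = V.card := by
        rw [Int.gcd]
        simp
      rw [this] at ha
      exact ha
    obtain ⟨v, hv⟩ := Finset.card_eq_one.mp hcard
    have hvV : v ∈ V := by rw [hv]; exact Finset.mem_singleton_self v
    have hxL : x ∈ L := by
      obtain ⟨⟨v', l⟩, ⟨hv', hl, he⟩, -⟩ := hL (x + v)
      have hv'v : v' = v := by
        have : v' ∈ V := hv'
        rw [hv] at this
        exact Finset.mem_singleton.mp this
      rw [hv'v] at he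
      have : l = x := by
        rw [add_comm] at he
        exact (add_left_cancel he).symm
      rwa [← this]
    refine ⟨(v, x), ⟨hvV, hxL, by simp⟩, ?_⟩
    rintro ⟨v', l'⟩ ⟨hv', hl', he⟩
    have hv'v : v' = v := by
      have : v' ∈ V := hv'
      rw [hv] at this
      exact Finset.mem_singleton.mp this
    have : l' = x := by
      rw [he]; simp
    simp [hv'v, this]
  · have hprimes : ∀ q : ℕ, q.Prime → (q : ℤ) ∣ a → ¬ (q ∣ V.card) := by
      intro q hq hqa hqc
      have hdg : (q : ℤ) ∣ (Int.gcd a (V.card : ℤ) : ℤ) :=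
        Int.dvd_coe_gcd hqa (Int.natCast_dvd_natCast.mpr hqc)
      rw [ha] at hdg
      have : q ∣ 1 := by exact_mod_cast hdg
      exact hq.one_lt.ne' (Nat.dvd_one.mp this)
    have hT : Blowout.Tiles L (V.image fun v => a • v) :=
      Blowout.tiles_zsmul hV a.natAbs a rfl ha0 hprimes
    have hainj : Function.Injective (fun v : Fin n → ℤ => a • v) :=
      smul_right_injective _ ha0
    obtain ⟨u, hu, hul⟩ := Blowout.exists_of_tiles hT x
    obtain ⟨v, hv, rfl⟩ := Finset.mem_image.mp hu
    refine ⟨(v, x - a • v), ⟨hv, hul, by simp⟩, ?_⟩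
    rintro ⟨v', l'⟩ ⟨hv', hl', he⟩
    have hmem : a • v' ∈ V.image fun v => a • v := Finset.mem_image_of_mem _ hv'
    have hl'eq : x - a • v' = l' := by rw [he]; simp
    have heq : a • v' = a • v := by
      apply Blowout.uniq_of_tiles hT (x := x) hmem hu
      · rw [hl'eq]; exact hl'
      · exact hul
    have hv'v : v' = v := hainj heq
    have : l' = x - a • v := by rw [← hl'eq, heq]
    simp [hv'v, this]
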